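/- arXiv:1106.5351 — 4 statements merged into one kernel-verified Lean document; each statement's English description precedes it below -/
import Mathlib

section
/- Let λ_1, ..., λ_K be pairwise distinct nonzero complex numbers and u_0, u_1, ..., u_K vectors in ℂ^d with each u_ℓ ≠ 0 for ℓ ≥ 1. The function u(t) = u_0 + Σ_{ℓ=1}^K e^{λ_ℓ t} u_ℓ is periodic (i.e., there exists T > 0 with u(t+T) = u(t) for all t) if and only if every λ_ℓ is purely imaginary and nonzero, and λ_j / λ_k ∈ ℚ for all j, k. -/
open Complex Real

noncomputable def expChar (z : ℂ) : Multiplicative ℝ →* ℂ where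
  toFun t := Complex.exp (z * (Multiplicative.toAdd t))
  map_one' := by simp
  map_mul' x y := by
    simp [toAdd_mul, mul_add, Complex.exp_add]

lemma exp_fun_inj {a b : ℂ} (h : ∀ t : ℝ, Complex.exp (a * t) = Complex.exp (b * t)) :
    a = b := by
  by_contra hne
  have hν : a - b ≠ 0 := sub_ne_zero.mpr hne
  have h1 : ∀ t : ℝ, Complex.exp ((a - b) * t) = 1 := by
    intro t
    rw [sub_mul, Complex.exp_sub, h t, div_self (Complex.exp_ne_zero _)]
  obtain ⟨n, hn⟩ := Complex.exp_eq_one_iff.mp (h1 1)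
  rw [Complex.ofReal_one, mul_one] at hn
  have hn0 : n ≠ 0 := by
    rintro rfl
    simp at hn
    exact hν hn
  obtain ⟨m, hm⟩ := Complex.exp_eq_one_iff.mp (h1 ((1 : ℝ) / (2 * n)))
  rw [hn] at hm
  have hnC : (n : ℂ) ≠ 0 := Int.cast_ne_zero.mpr hn0
  have hπ : (π : ℂ) ≠ 0 := Complex.ofReal_ne_zero.mpr Real.pi_ne_zero
  have h2 : (1 : ℂ) = 2 * m := by
    push_cast at hm
    have hne' : (2 * (π:ℂ) * Complex.I * n) ≠ 0 := by
      simp [hπ, hnC, Complex.I_ne_zero]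
    have key : (2 * (π:ℂ) * Complex.I * n) * 1 = (2 * (π:ℂ) * Complex.I * n) * (2 * m) := by
      field_simp at hm
      linear_combination (2 * (π:ℂ) * Complex.I * n) * hm
    exact mul_left_cancel₀ hne' key
  have : (1 : ℤ) = 2 * m := by exact_mod_cast h2
  omega

lemma exp_sum_coeffs_eq_zero {K : ℕ} {Λ : Fin K → ℂ} (hΛinj : Function.Injective Λ)
    (c : Fin K → ℂ) (h : ∀ t : ℝ, ∑ ℓ, c ℓ * Complex.exp (Λ ℓ * t) = 0) :
    ∀ ℓ, c ℓ = 0 := by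
  have hinj : Function.Injective (fun ℓ => expChar (Λ ℓ)) := by
    intro j k hjk
    apply hΛinj
    apply exp_fun_inj
    intro t
    exact DFunLike.congr_fun hjk (Multiplicative.ofAdd t)
  have li := (linearIndependent_monoidHom (Multiplicative ℝ) ℂ).comp
    (fun ℓ => expChar (Λ ℓ)) hinj
  refine Fintype.linearIndependent_iff.mp li c ?_
  funext t
  have := h (Multiplicative.toAdd t)
  simpa [expChar, Finset.sum_apply] using this

/-- `u(t) = u₀ + ∑ e^{λ_ℓ t} u_ℓ` (with pairwise distinct nonzero `λ_ℓ` and nonzero `u_ℓ`)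
is periodic iff every `λ_ℓ` is purely imaginary nonzero and all ratios `λ_j/λ_k` are rational. -/
theorem stmt1 (d K : ℕ) (u₀ : Fin d → ℂ) (u : Fin K → (Fin d → ℂ)) (hu : ∀ ℓ, u ℓ ≠ 0)
    (Λ : Fin K → ℂ) (hΛne : ∀ ℓ, Λ ℓ ≠ 0) (hΛinj : Function.Injective Λ) :
    (∃ T : ℝ, 0 < T ∧ ∀ t : ℝ,
        (u₀ + ∑ ℓ, Complex.exp (Λ ℓ * (t + T)) • u ℓ)
          = u₀ + ∑ ℓ, Complex.exp (Λ ℓ * t) • u ℓ)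
      ↔ ((∀ ℓ, (Λ ℓ).re = 0 ∧ Λ ℓ ≠ 0) ∧
          ∀ j k, ∃ q : ℚ, Λ j / Λ k = (q : ℂ)) := by
  constructor
  · rintro ⟨T, hT, hper⟩
    have hTne : (T : ℂ) ≠ 0 := Complex.ofReal_ne_zero.mpr hT.ne'
    have hcoef : ∀ (i : Fin d) (ℓ), (Complex.exp (Λ ℓ * T) - 1) * u ℓ i = 0 := by
      intro i
      apply exp_sum_coeffs_eq_zero hΛinj
      intro t
      have hs := add_left_cancel (hper t)
      have hi := congrFun hs i
      simp only [Finset.sum_apply, Pi.smul_apply, smul_eq_mul] at hi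
      have hterm : ∀ ℓ, (Complex.exp (Λ ℓ * T) - 1) * u ℓ i * Complex.exp (Λ ℓ * t)
          = Complex.exp (Λ ℓ * ((t : ℂ) + (T : ℂ))) * u ℓ i
            - Complex.exp (Λ ℓ * t) * u ℓ i := by
        intro ℓ
        rw [mul_add, Complex.exp_add]
        ring
      rw [Finset.sum_congr rfl fun ℓ _ => hterm ℓ, Finset.sum_sub_distrib, hi, sub_self]
    have hexp : ∀ ℓ, Complex.exp (Λ ℓ * T) = 1 := by
      intro ℓ
      obtain ⟨i, hi⟩ := Function.ne_iff.mp (hu ℓ)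
      have := hcoef i ℓ
      rcases mul_eq_zero.mp this with h | h
      · exact sub_eq_zero.mp h
      · exact absurd h (by simpa using hi)
    choose n hn using fun ℓ => Complex.exp_eq_one_iff.mp (hexp ℓ)
    have hnne : ∀ ℓ, (n ℓ : ℂ) ≠ 0 := by
      intro ℓ h0
      apply hΛne ℓ
      have := hn ℓ
      rw [h0, zero_mul] at this
      exact (mul_eq_zero.mp this).resolve_right hTne
    refine ⟨fun ℓ => ⟨?_, hΛne ℓ⟩, fun j k => ?_⟩
    · have := congrArg Complex.re (hn ℓ)
      simp [Complex.mul_re, Complex.mul_im] at this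
      rcases this with h | h
      · exact h
      · exact absurd h hT.ne'
    · refine ⟨(n j : ℚ) / (n k : ℚ), ?_⟩
      have hnkQ : ((n k : ℚ) : ℂ) ≠ 0 := by
        simpa using hnne k
      push_cast
      rw [div_eq_div_iff (hΛne k) (by simpa using hnne k)]
      apply mul_right_cancel₀ hTne
      linear_combination (n k : ℂ) * hn j - (n j : ℂ) * hn k
  · rintro ⟨h1, h2⟩
    rcases Nat.eq_zero_or_pos K with hK | hK
    · subst hK
      exact ⟨1, one_pos, fun t => by simp⟩
    · set ℓ₀ : Fin K := ⟨0, hK⟩ with hℓ₀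
      choose q hq using fun ℓ => h2 ℓ ℓ₀
      set θ : ℝ := (Λ ℓ₀).im with hθdef
      have hθ : θ ≠ 0 := by
        intro h0
        apply hΛne ℓ₀
        rw [Complex.ext_iff]
        exact ⟨(h1 ℓ₀).1, h0⟩
      set b : ℕ := ∏ ℓ, (q ℓ).den with hbdef
      have hbpos : 0 < b := Finset.prod_pos fun ℓ _ => (q ℓ).pos
      have hm' : ∀ ℓ, ∃ m : ℤ, (q ℓ) * b = (m : ℚ) := by
        intro ℓ
        have hd : ((q ℓ).den : ℤ) ∣ (b : ℤ) :=
          Int.natCast_dvd_natCast.mpr (Finset.dvd_prod_of_mem _ (Finset.mem_univ ℓ))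
        obtain ⟨c, hc⟩ := hd
        refine ⟨(q ℓ).num * c, ?_⟩
        have hbQ : (b : ℚ) = ((q ℓ).den : ℚ) * (c : ℚ) := by exact_mod_cast hc
        have hqden : (q ℓ) * ((q ℓ).den : ℚ) = ((q ℓ).num : ℚ) := by
          exact (eq_div_iff (Nat.cast_ne_zero.mpr (q ℓ).den_ne_zero)).mp
            (Rat.num_div_den (q ℓ)).symm
        rw [hbQ, ← mul_assoc, hqden]
        push_cast
        ring
      choose m hm using hm'
      refine ⟨2 * π * b / |θ|, by positivity, fun t => ?_⟩
      have key : ∀ ℓ, Complex.exp (Λ ℓ * ((2 * π * b / |θ| : ℝ) : ℂ)) = 1 := by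
        intro ℓ
        have hΛℓ : Λ ℓ = (q ℓ : ℂ) * Λ ℓ₀ := by
          have h := hq ℓ
          rw [div_eq_iff (hΛne ℓ₀)] at h
          rw [h]
        have hΛ0 : Λ ℓ₀ = (θ : ℂ) * Complex.I := by
          rw [Complex.ext_iff]
          constructor <;> simp [(h1 ℓ₀).1, hθdef]
        have hmC : (q ℓ : ℂ) * (b : ℂ) = (m ℓ : ℂ) := by exact_mod_cast congrArg (Rat.cast (K := ℂ)) (hm ℓ)
        rcases le_or_gt 0 θ with hθs | hθs
        · refine Complex.exp_eq_one_iff.mpr ⟨m ℓ, ?_⟩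
          rw [hΛℓ, hΛ0, _root_.abs_of_nonneg hθs]
          have hθC : (θ : ℂ) ≠ 0 := Complex.ofReal_ne_zero.mpr hθ
          push_cast
          rw [← hmC]
          field_simp
        · refine Complex.exp_eq_one_iff.mpr ⟨-(m ℓ), ?_⟩
          rw [hΛℓ, hΛ0, _root_.abs_of_neg hθs]
          have hθC : (θ : ℂ) ≠ 0 := Complex.ofReal_ne_zero.mpr hθ
          push_cast
          rw [← hmC]
          field_simp
      congr 1
      refine Finset.sum_congr rfl fun ℓ _ => ?_
      rw [mul_add, Complex.exp_add, key ℓ, mul_one]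
end

section
/- Let γ_{-N}, ..., γ_N ∈ ℂ satisfy Σ_k γ_k = 0 and Σ_k k γ_k = 1. Then for every fixed λ ∈ ℂ, the quantity −Σ_{k,ℓ} (γ_{k+ℓ} γ_ℓ / ε²) e^{kλε}, where the sum runs over −2N ≤ k ≤ 2N, −N ≤ ℓ ≤ N, |k+ℓ| ≤ N, tends to λ² as ε → 0. -/
open Finset Filter

/-- The symbol `−∑ (γ_{k+ℓ} γ_ℓ / ε²) e^{kλε}` of `−Box_{-ε} Box_ε` tends to `λ²`
as `ε → 0`. -/
theorem stmt9 (N : ℕ) (γ : ℤ → ℂ)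
    (h0 : ∑ k ∈ Finset.Icc (-(N : ℤ)) N, γ k = 0)
    (h1 : ∑ k ∈ Finset.Icc (-(N : ℤ)) N, (k : ℂ) * γ k = 1)
    (lam : ℂ) :
    Filter.Tendsto
      (fun ε : ℝ =>
        -∑ k ∈ Finset.Icc (-(2 * N : ℤ)) (2 * N),
          ∑ ℓ ∈ (Finset.Icc (-(N : ℤ)) N).filter (fun ℓ => |k + ℓ| ≤ (N : ℤ)),
            (γ (k + ℓ) * γ ℓ / (ε : ℂ) ^ 2) * Complex.exp (k * lam * ε))
      (nhdsWithin 0 {0}ᶜ) (nhds (lam ^ 2)) := by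
  set g : ℝ → ℂ := fun ε => ∑ j ∈ Finset.Icc (-(N : ℤ)) N, γ j * Complex.exp (j * lam * ε) with hg
  -- key algebraic identity
  have key : ∀ ε : ℝ,
      (∑ k ∈ Finset.Icc (-(2 * N : ℤ)) (2 * N),
          ∑ ℓ ∈ (Finset.Icc (-(N : ℤ)) N).filter (fun ℓ => |k + ℓ| ≤ (N : ℤ)),
            (γ (k + ℓ) * γ ℓ / (ε : ℂ) ^ 2) * Complex.exp (k * lam * ε))
        = g ε * g (-ε) / (ε : ℂ) ^ 2 := by
    intro ε
    have : g ε * g (-ε) = ∑ j ∈ Finset.Icc (-(N : ℤ)) N, ∑ ℓ ∈ Finset.Icc (-(N : ℤ)) N,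
        γ j * γ ℓ * Complex.exp ((j - ℓ) * lam * ε) := by
      rw [hg]
      rw [Finset.sum_mul_sum]
      refine Finset.sum_congr rfl fun j hj => Finset.sum_congr rfl fun ℓ hℓ => ?_
      rw [mul_mul_mul_comm, ← Complex.exp_add]
      push_cast
      ring_nf
    rw [this, Finset.sum_div]
    simp_rw [Finset.sum_div]
    rw [Finset.sum_sigma', Finset.sum_sigma']
    refine Finset.sum_nbij' (fun p => ⟨p.1 + p.2, p.2⟩) (fun p => ⟨p.1 - p.2, p.2⟩)
      ?_ ?_ ?_ ?_ ?_
    · rintro ⟨k, ℓ⟩ hp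
      simp only [Finset.mem_sigma, Finset.mem_filter, Finset.mem_Icc, abs_le] at hp ⊢
      omega
    · rintro ⟨j, ℓ⟩ hp
      simp only [Finset.mem_sigma, Finset.mem_filter, Finset.mem_Icc, abs_le] at hp ⊢
      omega
    · rintro ⟨k, ℓ⟩ _; simp
    · rintro ⟨j, ℓ⟩ _; simp
    · rintro ⟨k, ℓ⟩ _
      simp only [add_sub_cancel_right]
      push_cast
      ring_nf
  have hg0 : g 0 = 0 := by
    simp only [hg, Complex.ofReal_zero, mul_zero, Complex.exp_zero, mul_one]
    exact h0
  have hderiv : HasDerivAt g lam 0 := by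
    have hsum : HasDerivAt g (∑ j ∈ Finset.Icc (-(N : ℤ)) N,
        γ j * (Complex.exp ((j : ℂ) * lam * ((0:ℝ):ℂ)) * ((j : ℂ) * lam * 1))) 0 := by
      rw [hg]
      apply HasDerivAt.fun_sum
      intro j _
      have hc : HasDerivAt (fun ε : ℝ => ((ε : ℂ))) 1 0 := by
        exact Complex.ofRealCLM.hasDerivAt (x := (0:ℝ))
      exact ((hc.const_mul ((j : ℂ) * lam)).cexp).const_mul (γ j)
    convert hsum using 1
    simp only [Complex.ofReal_zero, mul_zero, Complex.exp_zero, one_mul, mul_one]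
    symm
    calc (∑ j ∈ Finset.Icc (-(N : ℤ)) N, γ j * ((j : ℂ) * lam))
        = (∑ j ∈ Finset.Icc (-(N : ℤ)) N, (j : ℂ) * γ j) * lam := by
          rw [Finset.sum_mul]; exact Finset.sum_congr rfl fun j _ => by ring
      _ = lam := by rw [h1, one_mul]
  have t1 : Tendsto (fun ε : ℝ => g ε / (ε : ℂ)) (nhdsWithin 0 {0}ᶜ) (nhds lam) := by
    have := hasDerivAt_iff_tendsto_slope.mp hderiv
    refine this.congr fun ε => ?_
    simp [slope, hg0, Complex.real_smul, div_eq_inv_mul]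
  have hneg : Tendsto (fun ε : ℝ => -ε) (nhdsWithin (0:ℝ) {0}ᶜ) (nhdsWithin (0:ℝ) {0}ᶜ) := by
    apply tendsto_nhdsWithin_of_tendsto_nhds_of_eventually_within
    · exact Filter.Tendsto.mono_left (by simpa using continuous_neg.tendsto (0:ℝ))
        nhdsWithin_le_nhds
    · filter_upwards [self_mem_nhdsWithin] with x hx
      simp only [Set.mem_compl_iff, Set.mem_singleton_iff] at hx ⊢
      simpa using hx
  have t2 : Tendsto (fun ε : ℝ => g (-ε) / ((-ε : ℝ) : ℂ)) (nhdsWithin (0:ℝ) {0}ᶜ)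
      (nhds lam) := t1.comp hneg
  have tprod := t1.mul t2
  rw [← sq] at tprod
  refine tprod.congr' ?_
  filter_upwards [self_mem_nhdsWithin] with ε hε
  have hε' : (ε : ℂ) ≠ 0 := by
    simpa using Complex.ofReal_ne_zero.mpr (by simpa using hε)
  rw [key]
  push_cast
  rw [div_mul_div_comm, show (ε:ℂ) * -(ε:ℂ) = -((ε:ℂ)^2) by ring, div_neg]
end

section
/- Let P(X) = a_0 X^m + ... + a_m ∈ ℂ[X] be nonzero with roots ξ_1, ..., ξ_r of multiplicities μ_1, ..., μ_r. Let ε_0 > 0 be such that the closed disks B_j centered at ξ_j with radius ε_0 are pairwise disjoint and contained in the open disk of radius 1/ε_0 about 0. Then there exists δ > 0 such that for any b_0, ..., b_m ∈ ℂ with |b_j − a_j| < δ for all j and Q(X) = b_0 X^m + ... + b_m nonzero, the polynomial Q has exactly μ_j roots (with multiplicity) in each B_j, and deg(Q) − deg(P) roots of absolute value greater than 1/ε_0. -/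
open Polynomial Metric

namespace Stmt11Aux

lemma prod_map_le {s : Multiset ℂ} {f g : ℂ → ℝ}
    (h0 : ∀ z ∈ s, 0 ≤ f z) (h : ∀ z ∈ s, f z ≤ g z) :
    (s.map f).prod ≤ (s.map g).prod := by
  induction s using Multiset.induction with
  | empty => simp
  | cons a s ih =>
    simp only [Multiset.map_cons, Multiset.prod_cons]
    have h0' : ∀ z ∈ s, 0 ≤ f z := fun z hz => h0 z (Multiset.mem_cons_of_mem hz)
    have h' : ∀ z ∈ s, f z ≤ g z := fun z hz => h z (Multiset.mem_cons_of_mem hz)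
    have hf : 0 ≤ (s.map f).prod := by
      refine Multiset.prod_nonneg ?_
      intro x hx
      obtain ⟨z, hz, rfl⟩ := Multiset.mem_map.mp hx
      exact h0' z hz
    exact mul_le_mul (h a (Multiset.mem_cons_self a s)) (ih h0' h') hf
      (le_trans (h0 a (Multiset.mem_cons_self a s)) (h a (Multiset.mem_cons_self a s)))

lemma prod_map_pos {s : Multiset ℂ} {f : ℂ → ℝ} (h : ∀ z ∈ s, 0 < f z) :
    0 < (s.map f).prod := by
  induction s using Multiset.induction with
  | empty => simp
  | cons a s ih =>
    simp only [Multiset.map_cons, Multiset.prod_cons]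
    exact mul_pos (h a (Multiset.mem_cons_self a s))
      (ih fun z hz => h z (Multiset.mem_cons_of_mem hz))

lemma prod_map_le_pow {s : Multiset ℂ} {f : ℂ → ℝ} {c : ℝ}
    (h0 : ∀ z ∈ s, 0 ≤ f z) (h : ∀ z ∈ s, f z ≤ c) :
    (s.map f).prod ≤ c ^ Multiset.card s := by
  have := prod_map_le (g := fun _ => c) h0 h
  simpa [Multiset.map_const', Multiset.prod_replicate] using this

lemma pow_le_prod_map {s : Multiset ℂ} {f : ℂ → ℝ} {c : ℝ} (hc : 0 ≤ c)
    (h : ∀ z ∈ s, c ≤ f z) :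
    c ^ Multiset.card s ≤ (s.map f).prod := by
  have := prod_map_le (f := fun _ => c) (g := f) (fun z _ => hc) h
  simpa [Multiset.map_const', Multiset.prod_replicate] using this

lemma norm_prod_map (s : Multiset ℂ) : (s.map fun z => ‖z‖).prod = ‖s.prod‖ := by
  induction s using Multiset.induction with
  | empty => simp
  | cons a s ih =>
    rw [Multiset.map_cons, Multiset.prod_cons, Multiset.prod_cons, norm_mul, ih]

lemma abs_eval_eq (S : Polynomial ℂ) (x : ℂ) :
    ‖S.eval x‖ = ‖S.leadingCoeff‖ * (S.roots.map fun z => ‖x - z‖).prod := by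
  conv_lhs => rw [(IsAlgClosed.splits S).eq_prod_roots]
  rw [eval_mul, eval_C, norm_mul, eval_multiset_prod]
  congr 1
  rw [← norm_prod_map, Multiset.map_map, Multiset.map_map]
  congr 1
  ext z
  simp


lemma core (s : Multiset ℂ) (p : ℂ → Prop) [DecidablePred p] (f₁ f₂ : ℂ → ℝ)
    (d₁ d₂ t L : ℝ) (hL : 0 < L) (hd₁ : 0 < d₁) (hd₂ : 0 < d₂) (ht0 : 0 < t) (ht1 : t < 1)
    (hn : ∀ z ∈ s, p z → d₁ * (1 - t) ≤ f₁ z ∧ f₁ z ≤ d₁ * (1 + t) ∧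
      d₂ * (1 - t) ≤ f₂ z ∧ f₂ z ≤ d₂ * (1 + t))
    (hf : ∀ z ∈ s, ¬ p z → 0 < f₂ z ∧ f₂ z * (1 - t) ≤ f₁ z ∧ f₁ z ≤ f₂ z * (1 + t)) :
    ∃ W : ℝ, 0 < W ∧
      d₂ ^ Multiset.card (s.filter p) * (1 - t) ^ Multiset.card (s.filter p) * W
        ≤ L * (s.map f₂).prod ∧
      L * (s.map f₂).prod
        ≤ d₂ ^ Multiset.card (s.filter p) * (1 + t) ^ Multiset.card (s.filter p) * W ∧
      d₁ ^ Multiset.card (s.filter p) *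
          (1 - t) ^ (Multiset.card (s.filter p) + Multiset.card (s.filter (fun z => ¬ p z))) * W
        ≤ L * (s.map f₁).prod ∧
      L * (s.map f₁).prod
        ≤ d₁ ^ Multiset.card (s.filter p) *
          (1 + t) ^ (Multiset.card (s.filter p) + Multiset.card (s.filter (fun z => ¬ p z))) * W := by
  classical
  set s₁ := s.filter p with hs₁
  set s₂ := s.filter (fun z => ¬ p z) with hs₂
  have hsplit : s₁ + s₂ = s := Multiset.filter_add_not p s
  set ν := Multiset.card s₁
  set φ := Multiset.card s₂
  have hmem₁ : ∀ z ∈ s₁, z ∈ s ∧ p z := by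
    intro z hz; exact ⟨Multiset.mem_of_mem_filter hz, Multiset.of_mem_filter hz⟩
  have hmem₂ : ∀ z ∈ s₂, z ∈ s ∧ ¬ p z := by
    intro z hz
    have := Multiset.mem_filter.mp hz
    exact ⟨this.1, this.2⟩
  have h1t : (0:ℝ) < 1 - t := by linarith
  have h1t' : (0:ℝ) < 1 + t := by linarith
  set w₂ := (s₂.map f₂).prod with hw₂
  have hw₂pos : 0 < w₂ :=
    prod_map_pos fun z hz => (hf z (hmem₂ z hz).1 (hmem₂ z hz).2).1
  set W := L * w₂ with hW
  have hWpos : 0 < W := mul_pos hL hw₂pos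
  refine ⟨W, hWpos, ?_, ?_, ?_, ?_⟩ <;>
  · have hsplit2 : (s.map f₂).prod = (s₁.map f₂).prod * w₂ := by
      rw [← hsplit, Multiset.map_add, Multiset.prod_add]
    have hsplit1 : (s.map f₁).prod = (s₁.map f₁).prod * (s₂.map f₁).prod := by
      rw [← hsplit, Multiset.map_add, Multiset.prod_add]
    have hnlo₂ : (d₂ * (1 - t)) ^ ν ≤ (s₁.map f₂).prod :=
      pow_le_prod_map (mul_nonneg hd₂.le h1t.le)
        (fun z hz => (hn z (hmem₁ z hz).1 (hmem₁ z hz).2).2.2.1)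
    have hnhi₂ : (s₁.map f₂).prod ≤ (d₂ * (1 + t)) ^ ν :=
      prod_map_le_pow
        (fun z hz => le_trans (mul_nonneg hd₂.le h1t.le) (hn z (hmem₁ z hz).1 (hmem₁ z hz).2).2.2.1)
        (fun z hz => (hn z (hmem₁ z hz).1 (hmem₁ z hz).2).2.2.2)
    have hnlo₁ : (d₁ * (1 - t)) ^ ν ≤ (s₁.map f₁).prod :=
      pow_le_prod_map (mul_nonneg hd₁.le h1t.le)
        (fun z hz => (hn z (hmem₁ z hz).1 (hmem₁ z hz).2).1)
    have hnhi₁ : (s₁.map f₁).prod ≤ (d₁ * (1 + t)) ^ ν :=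
      prod_map_le_pow
        (fun z hz => le_trans (mul_nonneg hd₁.le h1t.le) (hn z (hmem₁ z hz).1 (hmem₁ z hz).2).1)
        (fun z hz => (hn z (hmem₁ z hz).1 (hmem₁ z hz).2).2.1)
    have hflo : w₂ * (1 - t) ^ φ ≤ (s₂.map f₁).prod := by
      have := prod_map_le (s := s₂) (f := fun z => f₂ z * (1 - t)) (g := f₁)
        (fun z hz => mul_nonneg (hf z (hmem₂ z hz).1 (hmem₂ z hz).2).1.le h1t.le)
        (fun z hz => (hf z (hmem₂ z hz).1 (hmem₂ z hz).2).2.1)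
      calc w₂ * (1 - t) ^ φ
          = (s₂.map fun z => f₂ z * (1 - t)).prod := by
            rw [Multiset.prod_map_mul]
            simp [hw₂, Multiset.map_const', Multiset.prod_replicate]
            exact Or.inl rfl
        _ ≤ (s₂.map f₁).prod := this
    have hfhi : (s₂.map f₁).prod ≤ w₂ * (1 + t) ^ φ := by
      have := prod_map_le (s := s₂) (f := f₁) (g := fun z => f₂ z * (1 + t))
        (fun z hz => by
          have h := hf z (hmem₂ z hz).1 (hmem₂ z hz).2
          exact le_trans (mul_nonneg h.1.le h1t.le) h.2.1)
        (fun z hz => (hf z (hmem₂ z hz).1 (hmem₂ z hz).2).2.2)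
      calc (s₂.map f₁).prod
          ≤ (s₂.map fun z => f₂ z * (1 + t)).prod := this
        _ = w₂ * (1 + t) ^ φ := by
            rw [Multiset.prod_map_mul]
            simp [hw₂, Multiset.map_const', Multiset.prod_replicate]
            exact Or.inl rfl
    have hn₂nonneg : (0:ℝ) ≤ (s₁.map f₂).prod :=
      le_trans (pow_nonneg (mul_nonneg hd₂.le h1t.le) _) hnlo₂
    have hn₁nonneg : (0:ℝ) ≤ (s₁.map f₁).prod :=
      le_trans (pow_nonneg (mul_nonneg hd₁.le h1t.le) _) hnlo₁
    have hf₁nonneg : (0:ℝ) ≤ (s₂.map f₁).prod :=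
      le_trans (mul_nonneg hw₂pos.le (pow_nonneg h1t.le _)) hflo
    first
    | -- lower bound for f₂
      calc d₂ ^ ν * (1 - t) ^ ν * W = L * ((d₂ * (1 - t)) ^ ν * w₂) := by rw [mul_pow]; ring
        _ ≤ L * ((s₁.map f₂).prod * w₂) := by
            apply mul_le_mul_of_nonneg_left _ hL.le
            exact mul_le_mul_of_nonneg_right hnlo₂ hw₂pos.le
        _ = L * (s.map f₂).prod := by rw [hsplit2]
    | -- upper bound for f₂
      calc L * (s.map f₂).prod = L * ((s₁.map f₂).prod * w₂) := by rw [hsplit2]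
        _ ≤ L * ((d₂ * (1 + t)) ^ ν * w₂) := by
            apply mul_le_mul_of_nonneg_left _ hL.le
            exact mul_le_mul_of_nonneg_right hnhi₂ hw₂pos.le
        _ = d₂ ^ ν * (1 + t) ^ ν * W := by rw [mul_pow]; ring
    | -- lower bound for f₁
      calc d₁ ^ ν * (1 - t) ^ (ν + φ) * W
          = L * ((d₁ * (1 - t)) ^ ν * (w₂ * (1 - t) ^ φ)) := by
            rw [mul_pow, pow_add]; ring
        _ ≤ L * ((s₁.map f₁).prod * (s₂.map f₁).prod) := by
            apply mul_le_mul_of_nonneg_left _ hL.le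
            exact mul_le_mul hnlo₁ hflo (mul_nonneg hw₂pos.le (pow_nonneg h1t.le _)) hn₁nonneg
        _ = L * (s.map f₁).prod := by rw [hsplit1]
    | -- upper bound for f₁
      calc L * (s.map f₁).prod = L * ((s₁.map f₁).prod * (s₂.map f₁).prod) := by rw [hsplit1]
        _ ≤ L * ((d₁ * (1 + t)) ^ ν * (w₂ * (1 + t) ^ φ)) := by
            apply mul_le_mul_of_nonneg_left _ hL.le
            exact mul_le_mul hnhi₁ hfhi hf₁nonneg (pow_nonneg (mul_nonneg hd₁.le h1t'.le) _)
        _ = d₁ ^ ν * (1 + t) ^ (ν + φ) * W := by rw [mul_pow, pow_add]; ring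

lemma chain {ρ W1 W2 t A₁ A₂ B₁ B₂ : ℝ} {νn μn φ φ' K : ℕ}
    (hρ : 0 < ρ) (hW1 : 0 < W1) (hW2 : 0 < W2) (ht0 : 0 < t) (ht1 : t < 1)
    (hA1l : ρ ^ νn * (1 - t) ^ (νn + φ) * W1 ≤ A₁)
    (hA2u : A₂ ≤ (ρ / 2) ^ νn * (1 + t) ^ νn * W1)
    (hB1u : B₁ ≤ ρ ^ μn * (1 + t) ^ (μn + φ') * W2)
    (hB2l : (ρ / 2) ^ μn * (1 - t) ^ μn * W2 ≤ B₂)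
    (hC1 : (1 - t) * A₁ ≤ (1 + t) * B₁) (hC2 : (1 - t) * B₂ ≤ (1 + t) * A₂)
    (hE : νn + φ + μn + 2 ≤ K) (hE' : νn + μn + φ' + 2 ≤ K) :
    (1 - t) ^ K * 2 ^ νn ≤ (1 + t) ^ K * 2 ^ μn := by
  have h1t : (0:ℝ) < 1 - t := by linarith
  have h1t' : (0:ℝ) < 1 + t := by linarith
  have hXY : (1 - t) * (ρ ^ νn * (1 - t) ^ (νn + φ) * W1)
      ≤ (1 + t) * (ρ ^ μn * (1 + t) ^ (μn + φ') * W2) :=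
    le_trans (mul_le_mul_of_nonneg_left hA1l h1t.le)
      (le_trans hC1 (mul_le_mul_of_nonneg_left hB1u h1t'.le))
  have hUV : (1 - t) * ((ρ / 2) ^ μn * (1 - t) ^ μn * W2)
      ≤ (1 + t) * ((ρ / 2) ^ νn * (1 + t) ^ νn * W1) :=
    le_trans (mul_le_mul_of_nonneg_left hB2l h1t.le)
      (le_trans hC2 (mul_le_mul_of_nonneg_left hA2u h1t'.le))
  have hYpos : (0:ℝ) < (1 + t) * (ρ ^ μn * (1 + t) ^ (μn + φ') * W2) := by positivity
  have hUpos : (0:ℝ) < (1 - t) * ((ρ / 2) ^ μn * (1 - t) ^ μn * W2) := by positivity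
  have big := mul_le_mul hXY hUV hUpos.le hYpos.le
  set C := ρ ^ (νn + μn) * W1 * W2 / 2 ^ (νn + μn) with hC
  have hCpos : 0 < C := by positivity
  have e1 : (1 - t) * (ρ ^ νn * (1 - t) ^ (νn + φ) * W1) *
        ((1 - t) * ((ρ / 2) ^ μn * (1 - t) ^ μn * W2))
      = C * ((1 - t) ^ (νn + φ + μn + 2) * 2 ^ νn) := by
    rw [hC, div_pow]
    field_simp
    ring
  have e2 : (1 + t) * (ρ ^ μn * (1 + t) ^ (μn + φ') * W2) *
        ((1 + t) * ((ρ / 2) ^ νn * (1 + t) ^ νn * W1))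
      = C * ((1 + t) ^ (νn + μn + φ' + 2) * 2 ^ μn) := by
    rw [hC, div_pow]
    field_simp
    ring
  rw [e1, e2] at big
  have key : (1 - t) ^ (νn + φ + μn + 2) * 2 ^ νn ≤ (1 + t) ^ (νn + μn + φ' + 2) * 2 ^ μn :=
    (mul_le_mul_iff_right₀ hCpos).mp big
  have pad1 : (1 - t) ^ K ≤ (1 - t) ^ (νn + φ + μn + 2) :=
    pow_le_pow_of_le_one h1t.le (by linarith) hE
  have pad2 : (1 + t) ^ (νn + μn + φ' + 2) ≤ (1 + t) ^ K :=
    pow_le_pow_right₀ (by linarith) hE'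
  calc (1 - t) ^ K * 2 ^ νn ≤ (1 - t) ^ (νn + φ + μn + 2) * 2 ^ νn :=
        mul_le_mul_of_nonneg_right pad1 (by positivity)
    _ ≤ (1 + t) ^ (νn + μn + φ' + 2) * 2 ^ μn := key
    _ ≤ (1 + t) ^ K * 2 ^ μn := mul_le_mul_of_nonneg_right pad2 (by positivity)

lemma numeric {K νn μn : ℕ} {t : ℝ} (ht0 : 0 < t) (htK : t * (8 * K) ≤ 1) (hK : 1 ≤ K)
    (h : (1 - t) ^ K * 2 ^ νn ≤ (1 + t) ^ K * 2 ^ μn) : νn ≤ μn := by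
  have hK0 : (1:ℝ) ≤ (K:ℝ) := by exact_mod_cast hK
  have hKt : (K:ℝ) * t ≤ 1 / 8 := by nlinarith
  have ht8 : t ≤ 1 / 8 := by nlinarith
  have ht1 : t < 1 := by linarith
  have hlow : (7:ℝ) / 8 ≤ (1 - t) ^ K := by
    have hb := one_add_mul_le_pow (a := -t) (by linarith) K
    have : 1 + (K:ℝ) * (-t) ≤ (1 + -t) ^ K := hb
    have h2 : 1 - (K:ℝ) * t ≤ (1 - t) ^ K := by
      simpa [sub_eq_add_neg, mul_neg] using this
    linarith
  have hup : (1 + t) ^ K ≤ 8 / 7 := by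
    have hmul : (1 + t) ^ K * (1 - t) ^ K ≤ 1 := by
      rw [← mul_pow]
      have : (1 + t) * (1 - t) ≤ 1 := by nlinarith
      calc ((1 + t) * (1 - t)) ^ K ≤ 1 ^ K :=
            pow_le_pow_left₀ (by nlinarith) this K
        _ = 1 := one_pow K
    have hpow : (0:ℝ) < (1 - t) ^ K := by positivity
    nlinarith
  by_contra hlt
  push_neg at hlt
  have h2 : (2:ℝ) ^ μn * 2 ≤ 2 ^ νn := by
    calc (2:ℝ) ^ μn * 2 = 2 ^ (μn + 1) := by ring
      _ ≤ 2 ^ νn := pow_le_pow_right₀ one_le_two hlt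
  have hμpos : (0:ℝ) < 2 ^ μn := by positivity
  have hνpos : (0:ℝ) < 2 ^ νn := by positivity
  nlinarith [mul_le_mul_of_nonneg_right hlow hνpos.le]


lemma card_finsum {ι : Type*} (s : Finset ι) (f : ι → Multiset ℂ) :
    Multiset.card (∑ i ∈ s, f i) = ∑ i ∈ s, Multiset.card (f i) := by
  classical
  induction s using Finset.induction with
  | empty => simp
  | insert _ _ h ih => rw [Finset.sum_insert h, Finset.sum_insert h, Multiset.card_add, ih]

end Stmt11Aux

open Stmt11Aux

set_option maxHeartbeats 1600000 in
open Polynomial Metric in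
/-- Cucker–Corbalán: roots of a polynomial depend continuously on its coefficients, with
degree allowed to drop; the `deg Q − deg P` extra roots escape to infinity. -/
theorem stmt11 (m : ℕ) (a : Fin (m + 1) → ℂ)
    (P : Polynomial ℂ) (hP : P = ∑ i : Fin (m + 1), Polynomial.C (a i) * X ^ (m - (i : ℕ)))
    (hP0 : P ≠ 0) (r : ℕ) (ξ : Fin r → ℂ) (μ : Fin r → ℕ) (hξ : Function.Injective ξ)
    (hmul : ∀ j, P.rootMultiplicity (ξ j) = μ j)
    (hall : ∀ z : ℂ, P.IsRoot z → ∃ j, z = ξ j)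
    (ε₀ : ℝ) (hε₀ : 0 < ε₀)
    (hdisj : ∀ j k, j ≠ k → Disjoint (closedBall (ξ j) ε₀) (closedBall (ξ k) ε₀))
    (hin : ∀ j, closedBall (ξ j) ε₀ ⊆ ball (0 : ℂ) (1 / ε₀)) :
    ∃ δ : ℝ, 0 < δ ∧ ∀ b : Fin (m + 1) → ℂ, (∀ i, ‖b i - a i‖ < δ) →
      ∀ Q : Polynomial ℂ,
        Q = ∑ i : Fin (m + 1), Polynomial.C (b i) * X ^ (m - (i : ℕ)) → Q ≠ 0 →
        (∀ j, (Q.roots.filter (fun z => ‖z - ξ j‖ ≤ ε₀)).card = μ j) ∧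
        (Q.roots.filter (fun z => 1 / ε₀ < ‖z‖)).card
          = Q.natDegree - P.natDegree := by
  classical
  have hε₀inv : (0:ℝ) < 1 / ε₀ := by positivity
  -- degree bound for polynomials of the given shape
  have hdeg : ∀ cf : Fin (m + 1) → ℂ,
      (∑ i : Fin (m + 1), Polynomial.C (cf i) * X ^ (m - (i : ℕ))).natDegree ≤ m := by
    intro cf
    refine natDegree_sum_le_of_forall_le _ _ fun i _ => ?_
    refine (natDegree_mul_le).trans ?_
    rw [natDegree_C, natDegree_X_pow]
    omega
  have hPdeg : P.natDegree ≤ m := by rw [hP]; exact hdeg a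
  have hProots : Multiset.card P.roots = P.natDegree :=
    splits_iff_card_roots.mp (IsAlgClosed.splits P)
  have hPmem : ∀ z ∈ P.roots, ∃ k, z = ξ k := fun z hz => hall z (isRoot_of_mem_roots hz)
  have hcount : ∀ k, P.roots.count (ξ k) = μ k := by
    intro k; rw [count_roots]; exact hmul k
  -- separation of the centers
  have hsep : ∀ j k : Fin r, j ≠ k → 2 * ε₀ < ‖ξ j - ξ k‖ := by
    intro j k hjk
    by_contra hle
    push_neg at hle
    have hmem1 : midpoint ℝ (ξ j) (ξ k) ∈ closedBall (ξ j) ε₀ := by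
      rw [mem_closedBall, dist_midpoint_left, Complex.dist_eq]
      rw [show ‖(2:ℝ)‖ = 2 by norm_num]
      rw [inv_mul_le_iff₀ (by norm_num)]
      linarith
    have hmem2 : midpoint ℝ (ξ j) (ξ k) ∈ closedBall (ξ k) ε₀ := by
      rw [mem_closedBall, dist_midpoint_right, Complex.dist_eq]
      rw [show ‖(2:ℝ)‖ = 2 by norm_num]
      rw [inv_mul_le_iff₀ (by norm_num)]
      linarith
    exact Set.disjoint_left.mp (hdisj j k hjk) hmem1 hmem2
  -- the centers are well inside the big disk
  have hξnorm : ∀ j, ‖ξ j‖ + ε₀ < 1 / ε₀ := by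
    intro j
    by_cases h0 : ξ j = 0
    · have hmem : ((ε₀ : ℝ) : ℂ) ∈ closedBall (ξ j) ε₀ := by
        rw [mem_closedBall, h0, Complex.dist_eq, sub_zero, Complex.norm_real, Real.norm_eq_abs, abs_of_pos hε₀]
      have := hin j hmem
      rw [mem_ball, Complex.dist_eq, sub_zero, Complex.norm_real,
        Real.norm_eq_abs, abs_of_pos hε₀] at this
      rw [h0, norm_zero]
      linarith
    · set cξ : ℝ := 1 + ε₀ / ‖ξ j‖ with hcξ
      have hξpos : 0 < ‖ξ j‖ := norm_pos_iff.mpr h0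
      have hmem : ((cξ : ℝ) : ℂ) * ξ j ∈ closedBall (ξ j) ε₀ := by
        rw [mem_closedBall, Complex.dist_eq]
        have : ((cξ : ℝ) : ℂ) * ξ j - ξ j = ((ε₀ / ‖ξ j‖ : ℝ) : ℂ) * ξ j := by
          rw [hcξ]; push_cast; ring
        rw [this, norm_mul, Complex.norm_real, Real.norm_eq_abs,
          abs_of_pos (by positivity), div_mul_cancel₀]
        exact hξpos.ne'
      have := hin j hmem
      rw [mem_ball, Complex.dist_eq, sub_zero, norm_mul,
        Complex.norm_real, Real.norm_eq_abs, abs_of_pos (by positivity : (0:ℝ) < cξ)] at this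
      have hexp : cξ * ‖ξ j‖ = ‖ξ j‖ + ε₀ := by
        rw [hcξ, add_mul, one_mul, div_mul_cancel₀ _ (ne_of_gt hξpos)]
      linarith [hexp ▸ this]
  -- constants
  set Kn : ℕ := 3 * m + 3 with hKn
  set t : ℝ := 1 / (8 * Kn) with htdef
  have hKnR : (24:ℝ) ≤ 8 * (Kn:ℕ) := by
    have : (3:ℝ) ≤ (Kn : ℕ) := by exact_mod_cast (by omega : 3 ≤ Kn)
    linarith
  have ht0 : 0 < t := by
    rw [htdef]
    have : (0:ℝ) < 8 * (Kn:ℕ) := by linarith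
    positivity
  have ht24 : t ≤ 1 / 24 := by
    rw [htdef]
    apply one_div_le_one_div_of_le <;> linarith
  have ht1 : t < 1 := by linarith
  set ρ : ℝ := ε₀ * t with hρdef
  have hρ0 : 0 < ρ := mul_pos hε₀ ht0
  have hρε : ρ ≤ ε₀ / 24 := by
    rw [hρdef]
    calc ε₀ * t ≤ ε₀ * (1/24) := mul_le_mul_of_nonneg_left ht24 hε₀.le
      _ = ε₀ / 24 := by ring
  set η : ℝ := ρ * t / 4 with hηdef
  have hη0 : 0 < η := by rw [hηdef]; positivity
  have hρt : ρ * t ≤ ρ * (1/24) := mul_le_mul_of_nonneg_left ht24 hρ0.le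
  have hρtpos : 0 < ρ * t := mul_pos hρ0 ht0
  have hηρt : η ≤ ρ * t := by rw [hηdef]; linarith
  have hηρ2t : η ≤ (ρ/2) * t := by
    rw [hηdef, show (ρ/2) * t = (ρ * t)/2 from by ring]; linarith
  have hηρ2 : η < ρ / 2 := by rw [hηdef]; linarith
  have hηρ : η ≤ ρ := by rw [hηdef]; linarith
  have hηε : η ≤ ε₀ := by linarith
  -- compact minimum of ‖P‖ outside the small balls
  set Kset : Set ℂ := closedBall (0 : ℂ) (1 / ε₀) \ ⋃ j, ball (ξ j) η with hKsetdef
  obtain ⟨c, hc0, hc⟩ : ∃ c : ℝ, 0 < c ∧ ∀ x ∈ Kset, c ≤ ‖P.eval x‖ := by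
    rcases Set.eq_empty_or_nonempty Kset with hne | hne
    · exact ⟨1, one_pos, by simp [hne]⟩
    · have hKcpt : IsCompact Kset :=
        (isCompact_closedBall _ _).diff (isOpen_iUnion fun j => isOpen_ball)
      have hcont : ContinuousOn (fun x : ℂ => ‖P.eval x‖) Kset :=
        (continuous_norm.comp P.continuous).continuousOn
      obtain ⟨x₀, hx₀K, hx₀min⟩ := hKcpt.exists_isMinOn hne hcont
      refine ⟨‖P.eval x₀‖, ?_, fun x hx => isMinOn_iff.mp hx₀min x hx⟩
      rcases eq_or_ne (P.eval x₀) 0 with h0 | h0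
      · obtain ⟨k, rfl⟩ := hall x₀ h0
        exact absurd (Set.mem_iUnion.mpr ⟨k, mem_ball_self hη0⟩) hx₀K.2
      · simpa [norm_pos_iff] using h0
  set M : ℝ := (m + 1) * (max 1 (1 / ε₀)) ^ m with hMdef
  have hM1 : 1 ≤ M := by
    rw [hMdef]
    have h1 : (1:ℝ) ≤ (max 1 (1 / ε₀)) ^ m := one_le_pow₀ (le_max_left _ _)
    nlinarith [Nat.cast_nonneg (α := ℝ) m]
  have hM0 : 0 < M := by linarith
  refine ⟨t * c / M, by positivity, ?_⟩
  intro b hball Q hQ hQ0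
  have hb : ∀ i, ‖b i - a i‖ ≤ t * c / M := by
    intro i; exact (hball i).le
  have hQdeg : Q.natDegree ≤ m := by rw [hQ]; exact hdeg b
  have hQroots : Multiset.card Q.roots = Q.natDegree :=
    splits_iff_card_roots.mp (IsAlgClosed.splits Q)
  -- perturbation bound
  have hQP : ∀ x : ℂ, ‖x‖ ≤ 1 / ε₀ → ‖Q.eval x - P.eval x‖ ≤ t * c := by
    intro x hx
    have hQPx : Q.eval x - P.eval x = ∑ i : Fin (m+1), (b i - a i) * x ^ (m - (i:ℕ)) := by
      rw [hQ, hP, eval_finset_sum, eval_finset_sum, ← Finset.sum_sub_distrib]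
      refine Finset.sum_congr rfl fun i _ => ?_
      rw [eval_mul, eval_mul, eval_C, eval_C, eval_pow, eval_X]
      ring
    rw [hQPx]
    have hmax : (0:ℝ) ≤ max 1 (1/ε₀) := le_trans zero_le_one (le_max_left _ _)
    calc ‖∑ i : Fin (m+1), (b i - a i) * x ^ (m - (i:ℕ))‖
        ≤ ∑ i : Fin (m+1), ‖(b i - a i) * x ^ (m - (i:ℕ))‖ := norm_sum_le _ _
      _ ≤ ∑ _i : Fin (m+1), (t * c / M) * (max 1 (1/ε₀)) ^ m := by
          refine Finset.sum_le_sum fun i _ => ?_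
          rw [norm_mul, norm_pow]
          have h2 : ‖x‖ ^ (m - (i:ℕ)) ≤ (max 1 (1/ε₀)) ^ m := by
            calc ‖x‖ ^ (m - (i:ℕ)) ≤ (max 1 (1/ε₀)) ^ (m - (i:ℕ)) :=
                  pow_le_pow_left₀ (norm_nonneg x) (le_trans hx (le_max_right _ _)) _
              _ ≤ (max 1 (1/ε₀)) ^ m := pow_le_pow_right₀ (le_max_left _ _) (by omega)
          exact mul_le_mul (hb i) h2 (by positivity) (by positivity)
      _ = (m + 1) * ((t * c / M) * (max 1 (1/ε₀)) ^ m) := by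
          rw [Finset.sum_const, Finset.card_univ, Fintype.card_fin, nsmul_eq_mul]
          push_cast
          ring
      _ = (t * c) * (((m + 1) * (max 1 (1/ε₀)) ^ m) / M) := by ring
      _ = t * c := by rw [← hMdef, div_self hM0.ne', mul_one]
  -- localization of the small roots of Q
  have hloc : ∀ z ∈ Q.roots, ‖z‖ ≤ 1/ε₀ → ∃ k, ‖z - ξ k‖ < η := by
    intro z hz hznorm
    by_contra hno
    push_neg at hno
    have hzK : z ∈ Kset := by
      constructor
      · rw [mem_closedBall, Complex.dist_eq, sub_zero]
        exact hznorm
      · intro hmem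
        obtain ⟨s₀, ⟨k, rfl⟩, hk⟩ := hmem
        rw [mem_ball, Complex.dist_eq] at hk
        exact absurd hk (not_lt.mpr (hno k))
    have hcz := hc z hzK
    have hzero : Q.eval z = 0 := (mem_roots'.mp hz).2
    have hPz : ‖P.eval z‖ ≤ t * c := by
      have := hQP z hznorm
      rwa [hzero, zero_sub, norm_neg] at this
    have htc : t * c < c := mul_lt_of_lt_one_left hc0 ht1
    linarith
  -- uniqueness of nearby center
  have huniq : ∀ (z : ℂ) (k k' : Fin r), ‖z - ξ k‖ ≤ ε₀ → ‖z - ξ k'‖ ≤ η → k = k' := by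
    intro z k k' h1 h2
    by_contra hkk
    have hs := hsep k k' hkk
    have : ‖ξ k - ξ k'‖ ≤ ε₀ + η := by
      have h' := norm_add_le (-(z - ξ k)) (z - ξ k')
      rw [show -(z - ξ k) + (z - ξ k') = ξ k - ξ k' from by ring, norm_neg] at h'
      linarith
    linarith
  -- the count of P-roots near ξ j
  have hPcard : ∀ (j : Fin r) (β : ℝ), 0 ≤ β → β < 2 * ε₀ →
      Multiset.card (P.roots.filter (fun z => ‖z - ξ j‖ ≤ β)) = μ j := by
    intro j β hβ0 hβ
    have heq : P.roots.filter (fun z => ‖z - ξ j‖ ≤ β)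
        = P.roots.filter (fun z => ξ j = z) := by
      apply Multiset.filter_congr
      intro z hz
      obtain ⟨k, rfl⟩ := hPmem z hz
      constructor
      · intro h
        by_contra hne
        have hkj : k ≠ j := fun h' => hne (by rw [h'])
        have := hsep k j hkj
        linarith
      · intro h
        rw [← h, sub_self, norm_zero]
        exact hβ0
    rw [heq, ← Multiset.countP_eq_card_filter,
      show Multiset.countP (fun z => ξ j = z) P.roots = P.roots.count (ξ j) from rfl,
      hcount j]
  -- the central estimate : the number of roots of Q near ξ j is exactly μ j
  have hkey : ∀ j : Fin r,
      Multiset.card (Q.roots.filter (fun z => ‖z - ξ j‖ ≤ η)) = μ j := by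
    intro j
    set x₁ : ℂ := ξ j + ((ρ : ℝ) : ℂ) with hx₁def
    set x₂ : ℂ := ξ j + ((ρ/2 : ℝ) : ℂ) with hx₂def
    have hx₁ξ : x₁ - ξ j = ((ρ : ℝ) : ℂ) := by rw [hx₁def]; ring
    have hx₂ξ : x₂ - ξ j = ((ρ/2 : ℝ) : ℂ) := by rw [hx₂def]; ring
    have hx₁ξn : ‖x₁ - ξ j‖ = ρ := by
      rw [hx₁ξ, Complex.norm_real, Real.norm_eq_abs, abs_of_pos hρ0]
    have hx₂ξn : ‖x₂ - ξ j‖ = ρ/2 := by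
      rw [hx₂ξ, Complex.norm_real, Real.norm_eq_abs, abs_of_pos (by linarith)]
    have hx₁₂ : ‖x₁ - x₂‖ = ρ/2 := by
      have : x₁ - x₂ = ((ρ/2 : ℝ) : ℂ) := by rw [hx₁def, hx₂def]; push_cast; ring
      rw [this, Complex.norm_real, Real.norm_eq_abs, abs_of_pos (by linarith)]
    have hxnorm : ∀ x : ℂ, ‖x - ξ j‖ ≤ ρ → ‖x‖ ≤ 1/ε₀ := by
      intro x hx
      have h' := norm_add_le (x - ξ j) (ξ j)
      rw [sub_add_cancel] at h'
      linarith [hξnorm j, hρε]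
    have hx₁norm : ‖x₁‖ ≤ 1/ε₀ := hxnorm x₁ (le_of_eq hx₁ξn)
    have hx₂norm : ‖x₂‖ ≤ 1/ε₀ := hxnorm x₂ (by rw [hx₂ξn]; linarith)
    have hxK : ∀ x : ℂ, ‖x‖ ≤ 1/ε₀ → η < ‖x - ξ j‖ → ‖x - ξ j‖ ≤ ρ → x ∈ Kset := by
      intro x hx hxj hxρ
      constructor
      · rw [mem_closedBall, Complex.dist_eq, sub_zero]; exact hx
      · intro hmem
        obtain ⟨s₀, ⟨k, rfl⟩, hk⟩ := hmem
        rw [mem_ball, Complex.dist_eq] at hk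
        rcases eq_or_ne k j with rfl | hkj
        · exact absurd hk (not_lt.mpr hxj.le)
        · have := hsep k j hkj
          have h' := norm_add_le (-(x - ξ k)) (x - ξ j)
          rw [show -(x - ξ k) + (x - ξ j) = ξ k - ξ j from by ring, norm_neg] at h'
          linarith [hsep k j hkj, hηε, hρε]
    have hx₁K : x₁ ∈ Kset := hxK x₁ hx₁norm (by rw [hx₁ξn]; linarith) (le_of_eq hx₁ξn)
    have hx₂K : x₂ ∈ Kset := hxK x₂ hx₂norm (by rw [hx₂ξn]; linarith) (by rw [hx₂ξn]; linarith)
    -- comparisons between ‖Q‖ and ‖P‖ at the two test points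
    have hcomp : ∀ x : ℂ, x ∈ Kset → ‖x‖ ≤ 1/ε₀ →
        (1 - t) * ‖P.eval x‖ ≤ ‖Q.eval x‖ ∧ ‖Q.eval x‖ ≤ (1 + t) * ‖P.eval x‖ := by
      intro x hxK hxn
      have h1 := hc x hxK
      have h2 := hQP x hxn
      have h3 : |‖Q.eval x‖ - ‖P.eval x‖| ≤ t * c := le_trans (abs_norm_sub_norm_le _ _) h2
      rw [abs_le] at h3
      have h4 : t * c ≤ t * ‖P.eval x‖ := mul_le_mul_of_nonneg_left h1 ht0.le
      constructor <;> linarith [h3.1, h3.2]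
    have hcomp₁ := hcomp x₁ hx₁K hx₁norm
    have hcomp₂ := hcomp x₂ hx₂K hx₂norm
    -- generic far-root estimate
    have hfargen : ∀ z : ℂ, ε₀/2 ≤ ‖x₂ - z‖ →
        0 < ‖x₂ - z‖ ∧ ‖x₂ - z‖ * (1 - t) ≤ ‖x₁ - z‖ ∧ ‖x₁ - z‖ ≤ ‖x₂ - z‖ * (1 + t) := by
      intro z hz
      have hpos : 0 < ‖x₂ - z‖ := lt_of_lt_of_le (by linarith) hz
      have hsplit : x₁ - z = (x₂ - z) + (x₁ - x₂) := by ring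
      have hup : ‖x₁ - z‖ ≤ ‖x₂ - z‖ + ρ/2 := by
        rw [hsplit]
        exact le_trans (norm_add_le _ _) (by rw [hx₁₂])
      have hlo : ‖x₂ - z‖ - ρ/2 ≤ ‖x₁ - z‖ := by
        have := norm_sub_norm_le (x₂ - z) (x₂ - x₁)
        have he : (x₂ - z) - (x₂ - x₁) = x₁ - z := by ring
        rw [he] at this
        have : ‖x₂ - z‖ - ‖x₂ - x₁‖ ≤ ‖x₁ - z‖ := this
        rwa [norm_sub_rev x₂ x₁, hx₁₂] at this
      have hρ2 : ρ/2 ≤ t * ‖x₂ - z‖ := by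
        have : ρ/2 = t * (ε₀/2) := by rw [hρdef]; ring
        rw [this]
        exact mul_le_mul_of_nonneg_left hz ht0.le
      exact ⟨hpos, by linarith, by linarith⟩
    -- far-root bound for roots of Q away from ξ j
    have hfarQ : ∀ z ∈ Q.roots, ¬ (‖z - ξ j‖ ≤ η) → ε₀/2 ≤ ‖x₂ - z‖ := by
      intro z hz hnear
      by_cases hzn : ‖z‖ ≤ 1/ε₀
      · obtain ⟨k, hk⟩ := hloc z hz hzn
        have hkj : k ≠ j := by
          rintro rfl
          exact hnear hk.le
        have hs := hsep j k (Ne.symm hkj)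
        have h1' := norm_add_le (-(x₂ - ξ j) + (x₂ - z)) (z - ξ k)
        have h2' := norm_add_le (-(x₂ - ξ j)) (x₂ - z)
        rw [show -(x₂ - ξ j) + (x₂ - z) + (z - ξ k) = ξ j - ξ k from by ring] at h1'
        rw [norm_neg, hx₂ξn] at h2'
        linarith [hk.le, hρε, hηε]
      · push_neg at hzn
        have : ‖z‖ - ‖x₂‖ ≤ ‖x₂ - z‖ := by
          have := norm_sub_norm_le z x₂
          rwa [norm_sub_rev] at this
        have hx₂n : ‖x₂‖ ≤ ‖ξ j‖ + ρ/2 := by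
          calc ‖x₂‖ = ‖ξ j + ((ρ/2 : ℝ) : ℂ)‖ := by rw [hx₂def]
            _ ≤ ‖ξ j‖ + ‖((ρ/2 : ℝ) : ℂ)‖ := norm_add_le _ _
            _ = ‖ξ j‖ + ρ/2 := by
                rw [Complex.norm_real, Real.norm_eq_abs, abs_of_pos (by linarith)]
        linarith [hξnorm j, hρε]
    -- apply the core estimate to Q
    have hLQ : 0 < ‖Q.leadingCoeff‖ :=
      norm_pos_iff.mpr (leadingCoeff_ne_zero.mpr hQ0)
    obtain ⟨W1, hW1, hQ2l, hQ2u, hQ1l, hQ1u⟩ :=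
      core Q.roots (fun z => ‖z - ξ j‖ ≤ η) (fun z => ‖x₁ - z‖) (fun z => ‖x₂ - z‖)
        ρ (ρ/2) t ‖Q.leadingCoeff‖ hLQ hρ0 (by linarith) ht0 ht1
        (by
          intro z hz hnear
          have e₁ : x₁ - z = ((ρ : ℝ) : ℂ) - (z - ξ j) := by rw [hx₁def]; ring
          have e₂ : x₂ - z = ((ρ/2 : ℝ) : ℂ) - (z - ξ j) := by rw [hx₂def]; ring
          have hρn : ‖((ρ : ℝ) : ℂ)‖ = ρ := by
            rw [Complex.norm_real, Real.norm_eq_abs, abs_of_pos hρ0]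
          have hρ2n : ‖((ρ/2 : ℝ) : ℂ)‖ = ρ/2 := by
            rw [Complex.norm_real, Real.norm_eq_abs, abs_of_pos (by linarith)]
          have hub₁ : ‖x₁ - z‖ ≤ ρ + η := by
            rw [e₁]
            exact le_trans (norm_sub_le _ _) (by rw [hρn]; linarith)
          have hlb₁ : ρ - η ≤ ‖x₁ - z‖ := by
            have := norm_sub_norm_le ((ρ : ℝ) : ℂ) (z - ξ j)
            rw [← e₁, hρn] at this
            linarith
          have hub₂ : ‖x₂ - z‖ ≤ ρ/2 + η := by
            rw [e₂]
            exact le_trans (norm_sub_le _ _) (by rw [hρ2n]; linarith)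
          have hlb₂ : ρ/2 - η ≤ ‖x₂ - z‖ := by
            have := norm_sub_norm_le ((ρ/2 : ℝ) : ℂ) (z - ξ j)
            rw [← e₂, hρ2n] at this
            linarith
          refine ⟨by linarith, by linarith, by linarith, by linarith⟩)
        (by
          intro z hz hnear
          exact hfargen z (hfarQ z hz hnear))
    -- apply the core estimate to P
    have hLP : 0 < ‖P.leadingCoeff‖ :=
      norm_pos_iff.mpr (leadingCoeff_ne_zero.mpr hP0)
    obtain ⟨W2, hW2, hP2l, hP2u, hP1l, hP1u⟩ :=
      core P.roots (fun z => ‖z - ξ j‖ ≤ η) (fun z => ‖x₁ - z‖) (fun z => ‖x₂ - z‖)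
        ρ (ρ/2) t ‖P.leadingCoeff‖ hLP hρ0 (by linarith) ht0 ht1
        (by
          intro z hz hnear
          obtain ⟨k, rfl⟩ := hPmem z hz
          have hkj : k = j := by
            by_contra hne
            have := hsep k j hne
            linarith
          subst hkj
          refine ⟨?_, ?_, ?_, ?_⟩ <;> simp only [hx₁ξn, hx₂ξn] <;> linarith [hρtpos])
        (by
          intro z hz hnear
          obtain ⟨k, rfl⟩ := hPmem z hz
          have hkj : k ≠ j := by
            rintro rfl
            exact hnear (by simpa using hη0.le)
          have hs := hsep j k (Ne.symm hkj)
          have hfar : ε₀/2 ≤ ‖x₂ - ξ k‖ := by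
            have h' := norm_add_le (-(x₂ - ξ j)) (x₂ - ξ k)
            rw [show -(x₂ - ξ j) + (x₂ - ξ k) = ξ j - ξ k from by ring, norm_neg, hx₂ξn] at h'
            linarith [hρε]
          exact hfargen (ξ k) hfar)
    -- rewrite the evaluations
    rw [← abs_eval_eq Q x₁] at hQ1l hQ1u
    rw [← abs_eval_eq Q x₂] at hQ2l hQ2u
    rw [← abs_eval_eq P x₁] at hP1l hP1u
    rw [← abs_eval_eq P x₂] at hP2l hP2u
    set νn := Multiset.card (Q.roots.filter (fun z => ‖z - ξ j‖ ≤ η)) with hνn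
    set φn := Multiset.card (Q.roots.filter (fun z => ¬ ‖z - ξ j‖ ≤ η)) with hφn
    set μP := Multiset.card (P.roots.filter (fun z => ‖z - ξ j‖ ≤ η)) with hμPdef
    set φP := Multiset.card (P.roots.filter (fun z => ¬ ‖z - ξ j‖ ≤ η)) with hφP
    have hμP : μP = μ j := hPcard j η hη0.le (by linarith)
    have hQbudget : νn + φn ≤ m := by
      have : νn + φn = Multiset.card Q.roots := by
        rw [hνn, hφn, ← Multiset.card_add, Multiset.filter_add_not]
      omega
    have hPbudget : μP + φP ≤ m := by
      have : μP + φP = Multiset.card P.roots := by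
        rw [hμPdef, hφP, ← Multiset.card_add, Multiset.filter_add_not]
      omega
    have hA₁0 : (0:ℝ) ≤ ‖Q.eval x₁‖ := norm_nonneg _
    have hA₂0 : (0:ℝ) ≤ ‖Q.eval x₂‖ := norm_nonneg _
    have hB₁0 : (0:ℝ) ≤ ‖P.eval x₁‖ := norm_nonneg _
    have hB₂0 : (0:ℝ) ≤ ‖P.eval x₂‖ := norm_nonneg _
    have htK : t * (8 * Kn) ≤ 1 := by
      rw [htdef, one_div]
      rw [inv_mul_cancel₀ (by positivity : (8 * (Kn:ℕ) : ℝ) ≠ 0)]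
    have hKn1 : 1 ≤ Kn := by omega
    have hle1 : νn ≤ μP := by
      refine numeric ht0 htK hKn1 ?_
      refine chain hρ0 hW1 hW2 ht0 ht1 hQ1l hQ2u hP1u hP2l ?_ ?_ (by omega) (by omega)
      · linarith [hcomp₁.2, mul_nonneg ht0.le hA₁0]
      · linarith [hcomp₂.1, mul_nonneg ht0.le hA₂0]
    have hle2 : μP ≤ νn := by
      refine numeric ht0 htK hKn1 ?_
      refine chain hρ0 hW2 hW1 ht0 ht1 hP1l hP2u hQ1u hQ2l ?_ ?_ (by omega) (by omega)
      · linarith [hcomp₁.1, mul_nonneg ht0.le hA₁0]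
      · linarith [hcomp₂.2, mul_nonneg ht0.le hA₂0]
    omega
  -- decomposition of P.roots
  have hPdecomp : P.roots = ∑ j : Fin r, P.roots.filter (fun z => ‖z - ξ j‖ ≤ η) := by
    ext z
    rw [Multiset.count_sum']
    by_cases hz : z ∈ P.roots
    · obtain ⟨k, rfl⟩ := hPmem z hz
      rw [Finset.sum_eq_single_of_mem k (Finset.mem_univ k)]
      · rw [Multiset.count_filter, if_pos (by rw [sub_self, norm_zero]; exact hη0.le)]
      · intro j _ hjk
        rw [Multiset.count_filter, if_neg]
        intro hcon
        have := hsep k j (fun h => hjk (by rw [h]))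
        linarith
    · rw [Multiset.count_eq_zero_of_notMem hz]
      symm
      apply Finset.sum_eq_zero
      intro j _
      rw [Multiset.count_filter, Multiset.count_eq_zero_of_notMem hz, ite_self]
  have hμsum : ∑ j : Fin r, μ j = P.natDegree := by
    have hcgr := congrArg Multiset.card hPdecomp
    rw [hProots, card_finsum] at hcgr
    rw [Finset.sum_congr rfl (fun j (_ : j ∈ Finset.univ) =>
      hPcard j η hη0.le (by linarith))] at hcgr
    exact hcgr.symm
  -- decomposition of the small roots of Q
  have hsumQ : Q.roots.filter (fun z => ¬ (1/ε₀ < ‖z‖))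
      = ∑ j : Fin r, Q.roots.filter (fun z => ‖z - ξ j‖ ≤ η) := by
    ext z
    rw [Multiset.count_sum']
    by_cases hz : z ∈ Q.roots
    · by_cases hzn : 1/ε₀ < ‖z‖
      · rw [Multiset.count_filter, if_neg (not_not_intro hzn)]
        symm
        apply Finset.sum_eq_zero
        intro j _
        rw [Multiset.count_filter, if_neg]
        intro hcon
        have h' := norm_add_le (z - ξ j) (ξ j)
        rw [sub_add_cancel] at h'
        linarith [hξnorm j, hηε]
      · rw [Multiset.count_filter, if_pos hzn]
        obtain ⟨k, hk⟩ := hloc z hz (not_lt.mp hzn)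
        rw [Finset.sum_eq_single_of_mem k (Finset.mem_univ k)]
        · rw [Multiset.count_filter, if_pos hk.le]
        · intro j _ hjk
          rw [Multiset.count_filter, if_neg]
          intro hcon
          exact hjk (huniq z j k (le_trans hcon hηε) hk.le)
    · rw [Multiset.count_filter, Multiset.count_eq_zero_of_notMem hz, ite_self]
      symm
      apply Finset.sum_eq_zero
      intro j _
      rw [Multiset.count_filter, Multiset.count_eq_zero_of_notMem hz, ite_self]
  have hcard_small : Multiset.card (Q.roots.filter (fun z => ¬ (1/ε₀ < ‖z‖)))
      = P.natDegree := by
    rw [hsumQ, card_finsum,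
      Finset.sum_congr rfl (fun j (_ : j ∈ Finset.univ) => hkey j), hμsum]
  constructor
  · intro j
    have heq : Q.roots.filter (fun z => ‖z - ξ j‖ ≤ ε₀)
        = Q.roots.filter (fun z => ‖z - ξ j‖ ≤ η) := by
      apply Multiset.filter_congr
      intro z hz
      constructor
      · intro h
        have h' := norm_add_le (z - ξ j) (ξ j)
        rw [sub_add_cancel] at h'
        have hz1 : ‖z‖ ≤ 1/ε₀ := by linarith [hξnorm j]
        obtain ⟨k, hk⟩ := hloc z hz hz1
        have hjk := huniq z j k h hk.le
        rw [hjk]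
        exact hk.le
      · intro h
        exact le_trans h hηε
    rw [heq]
    exact hkey j
  · have heq : Q.roots.filter (fun z => 1/ε₀ < ‖z‖)
        = Q.roots.filter (fun z => 1/ε₀ < ‖z‖) := by
      apply Multiset.filter_congr
      intro z _
      exact Iff.rfl
    rw [heq]
    have hpart := congrArg Multiset.card
      (Multiset.filter_add_not (fun z => 1/ε₀ < ‖z‖) Q.roots)
    rw [Multiset.card_add, hQroots, hcard_small] at hpart
    omega
end

section
/- Let P_ν(λ) = (J_1 + 2(ν−1)J_3)λ² − 2J_5 λ − (J_2 + 2(ν−1)J_4) with J_2 + 2(n−1)J_4 invertible, and suppose det(P_n(λ)) has 2d distinct roots, det(P_0(λ)) has 2d distinct roots, the two root sets are disjoint, and neither polynomial vanishes at 0. For each root α of det P_n, choose x_{s,α} ∈ ker P_n(α), set x_{s,0} = −n (J_2 + 2(n−1)J_4)^{-1} J_7, and define x_{j,α} = 2 P_0(α)^{-1}(J_4 − α² J_3) x_{s,α} and x_{j,0} = −(J_2 − 2J_4)^{-1}(2J_4 x_{s,0} + J_7). Then x_{j,0} = (1/n) x_{s,0} and x_{j,α} = (1/n) x_{s,α} for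 every root α of det P_n. -/
open Matrix in
lemma aux_inv_mulVec {d : ℕ} {A : Matrix (Fin d) (Fin d) ℂ} (h : A.det ≠ 0)
    (x : Fin d → ℂ) : A⁻¹ *ᵥ (A *ᵥ x) = x := by
  rw [Matrix.mulVec_mulVec, Matrix.nonsing_inv_mul _ (isUnit_iff_ne_zero.mpr h),
    Matrix.one_mulVec]

open Matrix in
lemma aux_mulVec_inv {d : ℕ} {A : Matrix (Fin d) (Fin d) ℂ} (h : A.det ≠ 0)
    (x : Fin d → ℂ) : A *ᵥ (A⁻¹ *ᵥ x) = x := by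
  rw [Matrix.mulVec_mulVec, Matrix.mul_nonsing_inv _ (isUnit_iff_ne_zero.mpr h),
    Matrix.one_mulVec]

open Matrix in
/-- In the generic situation, the amplitudes of each particle are `1/n` times the amplitudes
of the center-of-mass sum: `x_{j,0} = (1/n) x_{s,0}` and `x_{j,α} = (1/n) x_{s,α}`. -/
theorem stmt17 (d n : ℕ) (hn : 1 ≤ n)
    (J₁ J₂ J₃ J₄ J₅ : Matrix (Fin d) (Fin d) ℝ)
    (hJ₁ : J₁.IsSymm) (hJ₂ : J₂.IsSymm) (hJ₃ : J₃.IsSymm) (hJ₄ : J₄.IsSymm)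
    (hJ₅ : J₅ᵀ = -J₅) (J₇ : Fin d → ℝ)
    (P : ℝ → ℂ → Matrix (Fin d) (Fin d) ℂ)
    (hP : ∀ (ν : ℝ) (lam : ℂ), P ν lam =
      lam ^ 2 • (J₁.map Complex.ofReal + ((2 * (ν - 1) : ℝ) : ℂ) • J₃.map Complex.ofReal)
        - (2 * lam) • J₅.map Complex.ofReal
        - (J₂.map Complex.ofReal + ((2 * (ν - 1) : ℝ) : ℂ) • J₄.map Complex.ofReal))
    (hinv : IsUnit (J₂ + (2 * ((n : ℝ) - 1)) • J₄))
    (hinv' : IsUnit (J₂ - 2 • J₄))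
    (Qn Q0 : Finset ℂ)
    (hQn : ∀ lam : ℂ, (P n lam).det = 0 ↔ lam ∈ Qn)
    (hQ0 : ∀ lam : ℂ, (P 0 lam).det = 0 ↔ lam ∈ Q0)
    (hcardn : Qn.card = 2 * d) (hcard0 : Q0.card = 2 * d)
    (hdisj : Disjoint Qn Q0)
    (h0n : (P n 0).det ≠ 0) (h00 : (P 0 0).det ≠ 0)
    (xs0 : Fin d → ℂ)
    (hxs0 : xs0 = -(n : ℂ) •
      (((J₂ + (2 * ((n : ℝ) - 1)) • J₄).map Complex.ofReal)⁻¹ *ᵥ (Complex.ofReal ∘ J₇))) :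
    (-(((J₂ - 2 • J₄).map Complex.ofReal)⁻¹ *ᵥ
        ((2 : ℂ) • (J₄.map Complex.ofReal *ᵥ xs0) + Complex.ofReal ∘ J₇))
      = (1 / (n : ℂ)) • xs0)
    ∧ ∀ α ∈ Qn, ∀ xsα : Fin d → ℂ, P (n : ℝ) α *ᵥ xsα = 0 →
        (2 : ℂ) • ((P 0 α)⁻¹ *ᵥ
            ((J₄.map Complex.ofReal - α ^ 2 • J₃.map Complex.ofReal) *ᵥ xsα))
          = (1 / (n : ℂ)) • xsα := by
  have hn0 : (n : ℂ) ≠ 0 := Nat.cast_ne_zero.mpr (by omega)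
  set J₃' := J₃.map Complex.ofReal with hJ3'
  set J₄' := J₄.map Complex.ofReal with hJ4'
  set M := (J₂ + (2 * ((n : ℝ) - 1)) • J₄).map Complex.ofReal with hM
  set N := (J₂ - 2 • J₄).map Complex.ofReal with hN
  -- invertibility of M and N over ℂ
  have hMdet : M.det ≠ 0 := by
    have : IsUnit M := by
      have := (Complex.ofRealHom.mapMatrix (m := Fin d)).isUnit_map hinv
      exact this
    intro h
    exact (Matrix.isUnit_iff_isUnit_det M).mp this |>.ne_zero h
  have hNdet : N.det ≠ 0 := by
    have : IsUnit N := by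
      have := (Complex.ofRealHom.mapMatrix (m := Fin d)).isUnit_map hinv'
      exact this
    intro h
    exact (Matrix.isUnit_iff_isUnit_det N).mp this |>.ne_zero h
  have hMN : M = N + (2 * (n : ℂ)) • J₄' := by
    ext i j
    simp only [hM, hN, hJ4', Matrix.map_apply, Matrix.add_apply, Matrix.sub_apply,
      Matrix.smul_apply, smul_eq_mul]
    push_cast
    simp only [nsmul_eq_mul]
    push_cast
    ring
  have hMxs0 : M *ᵥ xs0 = (-(n : ℂ)) • (Complex.ofReal ∘ J₇) := by
    rw [hxs0, Matrix.mulVec_smul, aux_mulVec_inv hMdet]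
  constructor
  · -- first part
    have key : N *ᵥ ((1 / (n : ℂ)) • xs0)
        = -((2 : ℂ) • (J₄' *ᵥ xs0) + Complex.ofReal ∘ J₇) := by
      have hNxs0 : N *ᵥ xs0 = M *ᵥ xs0 - (2 * (n : ℂ)) • (J₄' *ᵥ xs0) := by
        rw [hMN, Matrix.add_mulVec, Matrix.smul_mulVec]
        abel
      rw [Matrix.mulVec_smul, hNxs0, hMxs0]
      funext i
      simp only [Pi.smul_apply, Pi.sub_apply, Pi.add_apply, Pi.neg_apply, smul_eq_mul]
      field_simp
      ring
    calc -(N⁻¹ *ᵥ ((2 : ℂ) • (J₄' *ᵥ xs0) + Complex.ofReal ∘ J₇))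
        = N⁻¹ *ᵥ (-((2 : ℂ) • (J₄' *ᵥ xs0) + Complex.ofReal ∘ J₇)) := by
          rw [Matrix.mulVec_neg]
      _ = N⁻¹ *ᵥ (N *ᵥ ((1 / (n : ℂ)) • xs0)) := by rw [key]
      _ = (1 / (n : ℂ)) • xs0 := aux_inv_mulVec hNdet _
  · intro α hα xsα hxsα
    have hα0 : α ∉ Q0 := fun h => (Finset.disjoint_left.mp hdisj hα) h
    have hP0det : (P 0 α).det ≠ 0 := fun h => hα0 ((hQ0 α).mp h)
    have hsplit : P 0 α = P (n : ℝ) α + (2 * (n : ℂ)) • (J₄' - α ^ 2 • J₃') := by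
      rw [hP, hP]
      ext i j
      simp [hJ3', hJ4', Matrix.map_apply, Matrix.add_apply, Matrix.sub_apply,
        Matrix.smul_apply, smul_eq_mul]
      push_cast
      ring
    have hK : (J₄' - α ^ 2 • J₃') *ᵥ xsα = (1 / (2 * (n : ℂ))) • (P 0 α *ᵥ xsα) := by
      rw [hsplit, Matrix.add_mulVec, hxsα, Matrix.smul_mulVec, zero_add,
        smul_smul, one_div, inv_mul_cancel₀ (by simp [hn0]), one_smul]
    rw [hK, Matrix.mulVec_smul, aux_inv_mulVec hP0det, smul_smul]
    congr 1
    field_simp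
end
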